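/- Let p be a prime and m > 0 an integer, and let A ⊊ F_{p^m}^+ be a proper subset. Then for every B ⊆ F_{p^m}^+ with |B| < |F_{p^m}^+| / (|F_{p^m}^+| − |A|), there exists a set B' ⊆ A such that B' is isomorphic to B, i.e. there is λ ∈ F_{p^m}^* with λ·(B ∪ (−B)) = B' ∪ (−B'). -/

import Mathlib

/-!
Statement 10: Let `A ⊊ F_{p^m}^+`. For every `B ⊆ F_{p^m}^+` with
`|B| < |F_{p^m}^+| / (|F_{p^m}^+| − |A|)`, there is `B' ⊆ A` isomorphic to `B`,
i.e. `λ·(B ∪ (−B)) = B' ∪ (−B')` for some nonzero `λ`.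
-/

/-- `P` is a valid choice of `F^+`: a set of nonzero elements containing exactly one of
`x` and `−x` for every nonzero `x`. -/
def IsPlusSet {F : Type*} [Field F] (P : Set F) : Prop :=
  0 ∉ P ∧ ∀ x : F, x ≠ 0 → ((x ∈ P ∨ -x ∈ P) ∧ (x ∈ P → -x ∈ P → x = -x))

theorem stmt_10 {F : Type*} [Field F] [Fintype F] [DecidableEq F]
    (p m : ℕ) (hp : p.Prime) (hm : 0 < m) (hF : Fintype.card F = p ^ m)
    (P : Set F) (hP : IsPlusSet P)
    (A : Set F) (hA : A ⊂ P) :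
    ∀ B ⊆ P, (B.ncard : ℚ) < (P.ncard : ℚ) / ((P.ncard : ℚ) - (A.ncard : ℚ)) →
      ∃ B' ⊆ A, ∃ l : F, l ≠ 0 ∧ (fun x => l * x) '' (B ∪ -B) = B' ∪ -B' := by
  classical
  obtain ⟨hP0, hPx⟩ := hP
  intro B hB hcard
  have hPfin : P.Finite := Set.toFinite P
  have hAlt : A.ncard < P.ncard := Set.ncard_lt_ncard hA hPfin
  -- key counting inequality in ℕ
  have key : B.ncard * (P.ncard - A.ncard) < P.ncard := by
    have hpos : (0:ℚ) < (P.ncard:ℚ) - (A.ncard:ℚ) := by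
      have := hAlt
      push_cast
      exact sub_pos.mpr (by exact_mod_cast this)
    rw [lt_div_iff₀ hpos] at hcard
    have hc : (B.ncard : ℚ) * ((P.ncard - A.ncard : ℕ) : ℚ) < (P.ncard : ℚ) := by
      rw [Nat.cast_sub hAlt.le]; exact hcard
    exact_mod_cast hc
  -- bad multipliers
  set Bad : Set F := {l | l ∈ P ∧ ∃ b ∈ B, l * b ∉ A ∧ -(l * b) ∉ A} with hBad
  -- elements of P are nonzero
  have hne : ∀ x ∈ P, x ≠ 0 := fun x hx h0 => hP0 (h0 ▸ hx)
  -- injection Bad → B ×ˢ (P \ A)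
  have hinj : Bad.ncard ≤ (B ×ˢ (P \ A)).ncard := by
    have hspec : ∀ l ∈ Bad, ∃ b ∈ B, l * b ∉ A ∧ -(l * b) ∉ A := fun l hl => hl.2
    choose! bfun hbmem hbA hbA' using hspec
    set f : F → F × F := fun l =>
      (bfun l, if l * bfun l ∈ P then l * bfun l else -(l * bfun l)) with hf
    apply Set.ncard_le_ncard_of_injOn f
    · intro l hl
      have hlP : l ∈ P := hl.1
      have hl0 : l ≠ 0 := hne l hlP
      have hb : bfun l ∈ B := hbmem l hl
      have hb0 : bfun l ≠ 0 := hne _ (hB hb)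
      have hlb0 : l * bfun l ≠ 0 := mul_ne_zero hl0 hb0
      constructor
      · exact hb
      · by_cases hc : l * bfun l ∈ P
        · simp only [hf, hc, if_pos]
          exact ⟨hc, hbA l hl⟩
        · simp only [hf, hc, if_neg, not_false_iff]
          have : -(l * bfun l) ∈ P := ((hPx _ hlb0).1).resolve_left hc
          exact ⟨this, hbA' l hl⟩
    · intro l1 h1 l2 h2 heq
      have hb : bfun l1 = bfun l2 := congrArg Prod.fst heq
      have h2' : (if l1 * bfun l1 ∈ P then l1 * bfun l1 else -(l1 * bfun l1)) =
          (if l2 * bfun l2 ∈ P then l2 * bfun l2 else -(l2 * bfun l2)) :=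
        congrArg Prod.snd heq
      have hb0 : bfun l1 ≠ 0 := hne _ (hB (hbmem l1 h1))
      -- both normalized values equal; deduce l1 * b = ± l2 * b
      have hpm : l1 * bfun l1 = l2 * bfun l1 ∨ l1 * bfun l1 = -(l2 * bfun l1) := by
        rw [← hb] at h2'
        by_cases c1 : l1 * bfun l1 ∈ P <;> by_cases c2 : l2 * bfun l1 ∈ P <;>
          simp only [c1, c2, if_pos, if_neg, not_false_iff] at h2'
        · exact Or.inl h2'
        · exact Or.inr h2'
        · exact Or.inr (by rw [← h2', neg_neg])
        · exact Or.inl (neg_injective h2')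
      rcases hpm with h | h
      · exact mul_right_cancel₀ hb0 h
      · -- l1 = -l2, both in P ⇒ l1 = l2
        have hl12 : l1 = -l2 := by
          have : l1 * bfun l1 = (-l2) * bfun l1 := by rw [h]; ring
          exact mul_right_cancel₀ hb0 this
        have hl2P : l2 ∈ P := h2.1
        have hl1P : l1 ∈ P := h1.1
        have hl20 : l2 ≠ 0 := hne _ hl2P
        have : l2 = -l2 := (hPx l2 hl20).2 hl2P (hl12 ▸ hl1P)
        rw [hl12, ← this]
  have hprodcard : (B ×ˢ (P \ A)).ncard = B.ncard * (P \ A).ncard := by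
    simp [Set.ncard_eq_toFinset_card', Set.toFinset_prod]
  have hdiff : (P \ A).ncard = P.ncard - A.ncard :=
    Set.ncard_diff hA.subset (hPfin.subset hA.subset)
  have hBadlt : Bad.ncard < P.ncard := by
    calc Bad.ncard ≤ (B ×ˢ (P \ A)).ncard := hinj
    _ = B.ncard * (P.ncard - A.ncard) := by rw [hprodcard, hdiff]
    _ < P.ncard := key
  -- find a good l
  have hgood : ∃ l ∈ P, l ∉ Bad := by
    by_contra h
    push_neg at h
    have hsub : P ⊆ Bad := h
    exact absurd (Set.ncard_le_ncard hsub (Set.toFinite _)) (not_le.mpr hBadlt)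
  obtain ⟨l, hlP, hlB⟩ := hgood
  have hl0 : l ≠ 0 := hne l hlP
  have hgoodb : ∀ b ∈ B, l * b ∈ A ∨ -(l * b) ∈ A := by
    intro b hb
    by_contra hcon
    push_neg at hcon
    exact hlB ⟨hlP, b, hb, hcon.1, hcon.2⟩
  -- construct B'
  set S : Set F := (fun x => l * x) '' (B ∪ -B) with hS
  have hsym : ∀ x, x ∈ S → -x ∈ S := by
    rintro x ⟨y, hy, rfl⟩
    refine ⟨-y, ?_, by simp [mul_neg]⟩
    rcases hy with h | h
    · exact Or.inr (by simpa using h)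
    · exact Or.inl (by simpa using h)
  have hSsub : S ⊆ A ∪ -A := by
    rintro x ⟨y, hy, rfl⟩
    rcases hy with h | h
    · rcases hgoodb y h with h' | h'
      · exact Or.inl h'
      · exact Or.inr (by simpa using h')
    · have hy' : -y ∈ B := by simpa using h
      rcases hgoodb (-y) hy' with h' | h'
      · exact Or.inr (by simpa [mul_neg] using h')
      · exact Or.inl (by simpa [mul_neg] using h')
  refine ⟨S ∩ A, Set.inter_subset_right, l, hl0, ?_⟩
  ext x
  simp only [Set.mem_union, Set.mem_inter_iff, Set.mem_neg]
  constructor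
  · intro hx
    rcases hSsub hx with h | h
    · exact Or.inl ⟨hx, h⟩
    · exact Or.inr ⟨hsym x hx, by simpa using h⟩
  · rintro (⟨h1, _⟩ | ⟨h1, _⟩)
    · exact h1
    · simpa only [neg_neg] using hsym (-x) h1
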